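/- arXiv:2506.24038 — 3 statements merged into one kernel-verified Lean document; each statement's English description precedes it below -/
import Mathlib

section
/- Let R be a graded-commutative ring and T an R-linear triangulated category. Fix objects G, M ∈ T such that Hom*_T(G,M) is a noetherian R-module, and let x ∈ R be homogeneous. Then for all sufficiently large n, the composition Σ^{-1}(M//x^{n+1}) →^{ε(x^{n+1})} M →^{x^n·id} Σ^{n|x|} M is G-ghost. -/
/-!
Statement 6: Let `R` be a graded-commutative ring and `T` an `R`-linear triangulated
category. Fix `G, M ∈ T` such that `Hom*_T(G,M)` is a noetherian `R`-module, and let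
`x ∈ R` be homogeneous of degree `i`. Then for all sufficiently large `n`, the composition
`Σ⁻¹(M//x^{n+1}) → M → Σ^{n|x|} M` of the defining map of the Koszul object with
`x^n ⬝ id_M` is `G`-ghost.
-/

open CategoryTheory Limits Pretriangulated
open scoped DirectSum

universe v u

/-- A ℤ-graded ring is graded-commutative if `x * y = (-1)^{|x| |y|} y * x`
for homogeneous elements `x`, `y`. -/
def IsGradedComm (R : Type*) [Ring R] (𝒜 : ℤ → AddSubgroup R) : Prop :=
  ∀ (i j : ℤ) (x y : R), x ∈ 𝒜 i → y ∈ 𝒜 j →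
    x * y = if Even (i * j) then y * x else -(y * x)

section Graded

variable (R : Type*) [Ring R] (𝒜 : ℤ → AddSubgroup R)
variable {T : Type u} [Category.{v} T] [Preadditive T] [HasZeroObject T]
  [HasShift T ℤ] [∀ n : ℤ, (CategoryTheory.shiftFunctor T n).Additive] [Pretriangulated T]

/-- The graded Hom: `Hom*_T(M, N) = ∐_{n ∈ ℤ} Hom_T(M, Σⁿ N)`. -/
abbrev GHom (M N : T) : Type v := ⨁ n : ℤ, (M ⟶ N⟦n⟧)

/-- Composition of homogeneous components of graded Homs:
a degree `n` morphism `M → Σⁿ N` composed with a degree `m` morphism `N → Σᵐ P`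
yields a degree `n + m` morphism `M → Σ^{n+m} P`. -/
noncomputable def hcomp {M N P : T} {n m : ℤ} (f : M ⟶ N⟦n⟧) (g : N ⟶ P⟦m⟧) :
    M ⟶ P⟦n + m⟧ :=
  f ≫ g⟦n⟧' ≫ (shiftFunctorAdd' T m n (n + m) (add_comm m n)).inv.app P

variable (T)

/-- An `R`-linear structure on the triangulated category `T`, for a ℤ-graded ring `R`:
the graded Hom-sets are graded `R`-modules (homogeneous elements of degree `i` map the
degree `n` component to the degree `n + i` component), and composition is `R`-bilinear. -/
structure RLinearStructure where
  /-- the `R`-module structures on the graded Hom-sets -/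
  mod : ∀ M N : T, Module R (GHom M N)
  /-- scalar multiplication by a homogeneous element of degree `i` maps the degree `n`
  component into the degree `n + i` component -/
  degree : ∀ {i : ℤ} {x : R}, x ∈ 𝒜 i → ∀ {M N : T} {n : ℤ} (f : M ⟶ N⟦n⟧) (m : ℤ),
    m ≠ n + i →
      (letI := mod M N; (x • DirectSum.of (fun k => M ⟶ N⟦k⟧) n f) m) = 0
  /-- composition is `R`-linear in the first (inner) variable -/
  comp_smul_left : ∀ {i : ℤ} {x : R}, x ∈ 𝒜 i → ∀ {M N P : T} {n m : ℤ}
    (f : M ⟶ N⟦n⟧) (g : N ⟶ P⟦m⟧),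
      (letI := mod M P; letI := mod M N;
        x • DirectSum.of (fun k => M ⟶ P⟦k⟧) (n + m) (hcomp f g)
          = DirectSum.of (fun k => M ⟶ P⟦k⟧) ((n + i) + m)
              (hcomp ((x • DirectSum.of (fun k => M ⟶ N⟦k⟧) n f) (n + i)) g))
  /-- composition is `R`-linear in the second (outer) variable -/
  comp_smul_right : ∀ {i : ℤ} {x : R}, x ∈ 𝒜 i → ∀ {M N P : T} {n m : ℤ}
    (f : M ⟶ N⟦n⟧) (g : N ⟶ P⟦m⟧),
      (letI := mod M P; letI := mod N P;
        x • DirectSum.of (fun k => M ⟶ P⟦k⟧) (n + m) (hcomp f g)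
          = DirectSum.of (fun k => M ⟶ P⟦k⟧) (n + (m + i))
              (hcomp f ((x • DirectSum.of (fun k => N ⟶ P⟦k⟧) m g) (m + i))))

variable {R 𝒜 T}

/-- The identity of `M`, viewed as the degree `0` element of `Hom*_T(M, M)`. -/
noncomputable def idG (M : T) : GHom M M :=
  DirectSum.of (fun k => M ⟶ M⟦k⟧) 0 ((shiftFunctorZero T ℤ).inv.app M)

/-- The natural morphism `x ⬝ id_M : M ⟶ Σⁱ M` induced by a (homogeneous, degree `i`)
element `x` of `R`. -/
noncomputable def xMul (hL : RLinearStructure R 𝒜 T) (x : R) (i : ℤ) (M : T) : M ⟶ M⟦i⟧ :=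
  letI := hL.mod M M; (x • idG M) i

/-- A morphism `f : M ⟶ N` is `G`-ghost if every composition `Σⁿ G → M → N` vanishes. -/
def IsGhost (G : T) {M N : T} (f : M ⟶ N) : Prop :=
  ∀ (n : ℤ) (g : G⟦n⟧ ⟶ M), g ≫ f = 0

/-- The composition `K_t → K_{t-1} → ⋯ → K_0` of a chain of morphisms. -/
noncomputable def chainComp (K : ℕ → T) (ε : ∀ s : ℕ, K (s + 1) ⟶ K s) :
    ∀ t : ℕ, K t ⟶ K 0
  | 0 => 𝟙 (K 0)
  | t + 1 => ε t ≫ chainComp K ε t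

end Graded

section RegSeq

variable {R : Type*} [Ring R] (N : Type*) [AddCommGroup N] [Module R N]

/-- `S • N`: the submodule of `N` generated by the products `x • ν`, `x ∈ S`, `ν ∈ N`. -/
def smulSetSpan (S : Set R) : Submodule R N :=
  Submodule.span R {ν : N | ∃ x ∈ S, ∃ m : N, ν = x • m}

/-- `x :: xs` is a regular sequence on `N` modulo the submodule `p` if `x` is a
non-zerodivisor on `N/p` and `xs` is regular modulo `p + xN`. -/
def IsRegSeqFrom : Submodule R N → List R → Prop
  | _, [] => True
  | p, x :: xs => (∀ ν : N, x • ν ∈ p → ν ∈ p) ∧ IsRegSeqFrom (p ⊔ smulSetSpan N {x}) xs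

/-- `xs` is a regular sequence on the module `N`: each entry is a non-zerodivisor on the
quotient of `N` by the multiples of the previous entries. -/
def IsRegSeqOn (xs : List R) : Prop := IsRegSeqFrom N ⊥ xs

/-- The depth `depth_R(𝔞, N)` of a graded module `N` (when `𝔞 N ≠ N`): the supremum of the
lengths of the `N`-regular sequences of homogeneous elements contained in `𝔞`. -/
noncomputable def gradedDepth (𝒜 : ℤ → AddSubgroup R) (a : Ideal R) : ℕ∞ :=
  sSup {c : ℕ∞ | ∃ xs : List R,
    (∀ y ∈ xs, y ∈ a ∧ ∃ i : ℤ, y ∈ 𝒜 i) ∧ IsRegSeqOn N xs ∧ c = xs.length}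

end RegSeq


section Aux
set_option linter.unusedSectionVars false

variable {T : Type u} [Category.{v} T] [Preadditive T] [HasZeroObject T]
  [HasShift T ℤ] [∀ n : ℤ, (CategoryTheory.shiftFunctor T n).Additive] [Pretriangulated T]

/-- Components of a graded Hom element at propositionally equal indices agree up to
an `eqToHom`. -/
lemma ghom_apply_congr {A B : T} (v : GHom A B) {a b : ℤ} (h : a = b) :
    v b = v a ≫ eqToHom (by rw [h]) := by subst h; simp

lemma ghom_of_eq_zero_iff {A B : T} {k : ℤ} (u : A ⟶ B⟦k⟧) :
    DirectSum.of (fun k : ℤ => A ⟶ B⟦k⟧) k u = 0 ↔ u = 0 := by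
  constructor
  · intro hu
    have h2 : (DirectSum.of (fun k : ℤ => A ⟶ B⟦k⟧) k u) k
        = (0 : ⨁ k : ℤ, (A ⟶ B⟦k⟧)) k := by rw [hu]
    rwa [DirectSum.of_eq_same, DirectSum.zero_apply] at h2
  · rintro rfl; exact map_zero _

lemma comp_iso_eq_zero_iff {A B C : T} (f : A ⟶ B) (e : B ⟶ C) [IsIso e] :
    f ≫ e = 0 ↔ f = 0 := by
  constructor
  · intro h
    have := h =≫ inv e
    simpa using this
  · rintro rfl; simp

lemma iso_comp_eq_zero_iff {A B C : T} (e : A ⟶ B) (f : B ⟶ C) [IsIso e] :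
    e ≫ f = 0 ↔ f = 0 := by
  constructor
  · intro h
    have := inv e ≫= h
    simpa using this
  · rintro rfl; simp

lemma shift_map_eq_zero_iff {A B : T} (f : A ⟶ B) (m : ℤ) :
    (f⟦m⟧' = 0) ↔ f = 0 := by
  constructor
  · intro h
    apply (shiftFunctor T m).map_injective
    simpa using h
  · rintro rfl; simp

end Aux

/-- For `n ≫ 0` the map `ε(x^{n+1}) ≫ (x^n ⬝ id_M)` is `G`-ghost.
Here `K` together with the distinguished triangle
`K → M → Σ^{(n+1)i} M → ΣK` realizes `Σ⁻¹(M//x^{n+1})` and its defining map `ε`. -/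
theorem eventually_kos_map_ghost
    (R : Type*) [Ring R] (𝒜 : ℤ → AddSubgroup R) [GradedRing 𝒜]
    (hgc : IsGradedComm R 𝒜)
    (T : Type u) [Category.{v} T] [Preadditive T] [HasZeroObject T] [HasShift T ℤ]
    [∀ n : ℤ, (CategoryTheory.shiftFunctor T n).Additive] [Pretriangulated T]
    (hL : RLinearStructure R 𝒜 T)
    (G M : T)
    (hnoeth : letI := hL.mod G M; IsNoetherian R (GHom G M))
    (x : R) (i : ℤ) (hx : x ∈ 𝒜 i) :
    ∃ n₀ : ℕ, ∀ n : ℕ, n₀ ≤ n →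
      ∀ (K : T) (ε : K ⟶ M) (δ : M⟦((n : ℤ) + 1) * i⟧ ⟶ K⟦(1 : ℤ)⟧),
        Triangle.mk ε (xMul hL (x ^ (n + 1)) (((n : ℤ) + 1) * i) M) δ ∈ (distTriang T) →
          IsGhost G (ε ≫ xMul hL (x ^ n) ((n : ℤ) * i) M) := by
  classical
  letI := hL.mod G M
  letI := hL.mod M M
  -- the element of `Hom*(G, M)` attached to a morphism `h : G⟦m⟧ ⟶ M`
  let ι : M ⟶ M⟦(0 : ℤ)⟧ := (shiftFunctorZero T ℤ).inv.app M
  let Hel : ∀ (m : ℤ), ((G⟦m⟧ : T) ⟶ M) → GHom G M := fun m h =>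
    DirectSum.of (fun k : ℤ => G ⟶ M⟦k⟧) ((-m) + 0)
      (hcomp ((shiftFunctorCompIsoId T m (-m) (add_neg_cancel m)).inv.app G ≫ h⟦-m⟧') ι)
  -- master lemma: `y • Hel m h = 0` iff `h ≫ (y ⬝ id) = 0`
  have master : ∀ (j : ℤ) (y : R), y ∈ 𝒜 j → ∀ (m : ℤ) (h : (G⟦m⟧ : T) ⟶ M),
      (y • Hel m h = 0 ↔ h ≫ xMul hL y j M = 0) := by
    intro j y hy m h
    set e : (G : T) ⟶ ((G⟦m⟧ : T)⟦-m⟧ : T) :=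
      (shiftFunctorCompIsoId T m (-m) (add_neg_cancel m)).inv.app G with he
    set h' : (G : T) ⟶ (M⟦-m⟧ : T) := e ≫ h⟦-m⟧' with hh'
    have hel_eq : y • Hel m h
        = DirectSum.of (fun k : ℤ => G ⟶ M⟦k⟧) ((-m) + (0 + j))
            (hcomp h' ((y • DirectSum.of (fun k : ℤ => M ⟶ M⟦k⟧) 0 ι) (0 + j))) :=
      hL.comp_smul_right hy h' ι
    have hw : ((y • DirectSum.of (fun k : ℤ => M ⟶ M⟦k⟧) 0 ι) (0 + j))
        = xMul hL y j M ≫ eqToHom (show (M⟦j⟧ : T) = (M⟦(0:ℤ)+j⟧ : T) by rw [zero_add]) := by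
      have h0 := ghom_apply_congr (T := T)
        (y • DirectSum.of (fun k : ℤ => M ⟶ M⟦k⟧) 0 ι) (zero_add j).symm
      exact h0
    have hcomp_eq : hcomp h' ((y • DirectSum.of (fun k : ℤ => M ⟶ M⟦k⟧) 0 ι) (0 + j))
        = h' ≫ ((y • DirectSum.of (fun k : ℤ => M ⟶ M⟦k⟧) 0 ι) (0 + j))⟦(-m : ℤ)⟧'
            ≫ (shiftFunctorAdd' T (0 + j) (-m) ((-m) + (0 + j))
                (add_comm (0 + j) (-m))).inv.app M := rfl
    rw [hel_eq, ghom_of_eq_zero_iff, hcomp_eq, ← Category.assoc, comp_iso_eq_zero_iff,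
      hh', Category.assoc, iso_comp_eq_zero_iff, ← Functor.map_comp, shift_map_eq_zero_iff,
      hw, ← Category.assoc, comp_iso_eq_zero_iff]
  -- the chain of submodules `Γ n = {h | xⁿ • h = 0}`
  have hxn : ∀ n : ℕ, x ^ n ∈ 𝒜 ((n : ℤ) * i) := by
    intro n
    have := SetLike.pow_mem_graded n hx
    rwa [nsmul_eq_mul] at this
  have smul_mem_aux : ∀ (n : ℕ) (h : GHom G M), x ^ n • h = 0 → ∀ r : R,
      (x ^ n * r) • h = 0 := by
    intro n h hh r
    refine DirectSum.Decomposition.inductionOn 𝒜 (motive := fun r => (x ^ n * r) • h = 0)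
      ?_ ?_ ?_ r
    · simp
    · intro k r'
      rw [hgc _ k _ _ (SetLike.pow_mem_graded n hx) r'.2]
      split_ifs with hev
      · rw [mul_smul, hh, smul_zero]
      · rw [neg_smul, mul_smul, hh, smul_zero, neg_zero]
    · intro a b ha hb
      rw [mul_add, add_smul, ha, hb, add_zero]
  let Γ : ℕ →o Submodule R (GHom G M) :=
    { toFun := fun n =>
        { carrier := {h | x ^ n • h = 0}
          add_mem' := fun ha hb => by
            simp only [Set.mem_setOf_eq] at *
            rw [smul_add, ha, hb, add_zero]
          zero_mem' := smul_zero _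
          smul_mem' := fun r h hh => by
            simp only [Set.mem_setOf_eq] at *
            rw [← mul_smul]
            exact smul_mem_aux _ _ hh r }
      monotone' := by
        refine monotone_nat_of_le_succ ?_
        intro n h hh
        simp only [Set.mem_setOf_eq, Submodule.mem_mk, AddSubmonoid.mem_mk,
          AddSubsemigroup.mem_mk] at *
        rw [pow_succ', mul_smul, hh, smul_zero] }
  obtain ⟨n₀, hn₀⟩ := monotone_stabilizes_iff_noetherian.mpr hnoeth Γ
  refine ⟨n₀, fun n hn K ε δ htri => ?_⟩
  intro m g
  have hz : ε ≫ xMul hL (x ^ (n + 1)) (((n : ℤ) + 1) * i) M = 0 :=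
    comp_distTriang_mor_zero₁₂ _ htri
  have hx1 : x ^ (n + 1) ∈ 𝒜 (((n : ℤ) + 1) * i) := by
    have := hxn (n + 1)
    rwa [Nat.cast_add, Nat.cast_one] at this
  have h1 : x ^ (n + 1) • Hel m (g ≫ ε) = 0 := by
    rw [master _ _ hx1 m (g ≫ ε), Category.assoc, hz, Limits.comp_zero]
  have h2 : Hel m (g ≫ ε) ∈ Γ n := by
    have e1 : Γ n₀ = Γ (n + 1) := hn₀ (n + 1) (le_trans hn (Nat.le_succ n))
    have e2 : Γ n₀ = Γ n := hn₀ n hn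
    have hmem : Hel m (g ≫ ε) ∈ Γ (n + 1) := h1
    rw [← e1, e2] at hmem
    exact hmem
  have h3 : x ^ n • Hel m (g ≫ ε) = 0 := h2
  have h4 := (master _ _ (hxn n) m (g ≫ ε)).mp h3
  rw [← Category.assoc]
  exact h4
end

section
/- Let R be a graded-commutative ring, T an R-linear triangulated category, M ∈ T, and let x_1, …, x_t ∈ R be a regular sequence on the graded R-module 𝓜 = Hom*_T(M,M). Then there is an isomorphism of graded R-modules Hom*_T(Σ^{-t}(M//(x_1,…,x_t)), M) ≅ 𝓜/(x_1,…,x_t)𝓜 under which the canonical morphism Σ^{-t}(M//(x_1,…,x_t)) → M (the composite ε(x_1)∘⋯∘ε(x_t) of the defining maps of the iterated Koszul objects) corresponds to the class [id_M]. -/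
/-!
Statement 8: Let `R` be a graded-commutative ring, `T` an `R`-linear triangulated category,
`M ∈ T`, and let `x₁, …, x_t ∈ R` be a regular sequence on the graded `R`-module
`𝓜 = Hom*_T(M,M)`. Then there is an isomorphism of graded `R`-modules
`Hom*_T(Σ^{-t}(M//(x₁,…,x_t)), M) ≅ 𝓜/(x₁,…,x_t)𝓜` under which the canonical morphism
`Σ^{-t}(M//(x₁,…,x_t)) → M` (the composite of the defining maps `ε(xᵢ)` of the iterated
Koszul objects) corresponds to the class `[id_M]`. The iterated (desuspended) Koszul
objects are encoded as a chain `K t → ⋯ → K 0 = M` of distinguished triangles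
`K (s+1) → K s → Σ^{|x_s|} K s → Σ K (s+1)`.
-/

open CategoryTheory Limits Pretriangulated
open scoped DirectSum

universe v u

section Toolkit

variable {R : Type*} [Ring R] {𝒜 : ℤ → AddSubgroup R}
variable {T : Type u} [Category.{v} T] [Preadditive T] [HasZeroObject T]
  [HasShift T ℤ] [∀ n : ℤ, (CategoryTheory.shiftFunctor T n).Additive] [Pretriangulated T]

lemma ofG_cast {A B : T} {n n' : ℤ} (h : n = n') (f : A ⟶ B⟦n⟧) :
    DirectSum.of (fun k => A ⟶ B⟦k⟧) n' (f ≫ eqToHom (by rw [h])) =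
    DirectSum.of (fun k => A ⟶ B⟦k⟧) n f := by
  subst h; simp

lemma apply_cast {A B : T} (v : GHom A B) {n n' : ℤ} (h : n = n') :
    v n' = v n ≫ eqToHom (by rw [h]) := by
  subst h; simp

set_option linter.unusedSectionVars false

lemma shiftFunctorAdd'_inv_app_congr {a b c c' : ℤ} (h : a + b = c) (hc : c = c') (X : T) :
    (shiftFunctorAdd' T a b c' (h.trans hc)).inv.app X =
    (shiftFunctorAdd' T a b c h).inv.app X ≫ eqToHom (by rw [hc]) := by
  subst hc; simp

lemma shiftAdd'_m_zero (m : ℤ) (P : T) (h₀ : m + 0 = 0 + m) :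
    (shiftFunctorAdd' T m 0 ((0:ℤ)+m) h₀).inv.app P =
    (shiftFunctorZero T ℤ).hom.app (P⟦m⟧) ≫ eqToHom (by rw [zero_add]; rfl) := by
  have := shiftFunctorAdd'_inv_app_congr (T := T) (add_zero m) (zero_add m).symm P
  rw [shiftFunctorAdd'_add_zero_inv_app] at this
  exact this

lemma shiftAdd'_zero_n (n : ℤ) (B : T) (h₀ : (0:ℤ) + n = n + 0) :
    (shiftFunctorAdd' T 0 n (n+(0:ℤ)) h₀).inv.app B =
    ((shiftFunctorZero T ℤ).hom.app B)⟦n⟧' ≫ eqToHom (by rw [add_zero]; rfl) := by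
  have := shiftFunctorAdd'_inv_app_congr (T := T) (zero_add n) (add_zero n).symm B
  rw [shiftFunctorAdd'_zero_add_inv_app] at this
  exact this

lemma hcomp_left_unit {A B P : T} {m : ℤ} (e : A ⟶ B) (g : B ⟶ P⟦m⟧) :
    hcomp (e ≫ (shiftFunctorZero T ℤ).inv.app B) g = (e ≫ g) ≫ eqToHom (by rw [zero_add]) := by
  dsimp [hcomp]
  rw [shiftAdd'_m_zero]
  have h1 : (shiftFunctorZero T ℤ).inv.app B ≫ g⟦(0:ℤ)⟧' =
      g ≫ (shiftFunctorZero T ℤ).inv.app (P⟦m⟧) :=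
    ((shiftFunctorZero T ℤ).inv.naturality g).symm
  slice_lhs 2 3 => rw [h1]
  simp

lemma hcomp_right_unit {A B : T} {n : ℤ} (f : A ⟶ B⟦n⟧) :
    hcomp f ((shiftFunctorZero T ℤ).inv.app B) = f ≫ eqToHom (by rw [add_zero]) := by
  dsimp [hcomp]
  rw [shiftAdd'_zero_n]
  rw [← Functor.map_comp_assoc]
  simp

lemma of_hcomp_cast_left {A B P : T} {n n' m : ℤ} (h : n = n') (f : A ⟶ B⟦n⟧) (g : B ⟶ P⟦m⟧) :
    DirectSum.of (fun k => A ⟶ P⟦k⟧) (n' + m) (hcomp (f ≫ eqToHom (by rw [h])) g) =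
    DirectSum.of (fun k => A ⟶ P⟦k⟧) (n + m) (hcomp f g) := by
  subst h; simp

lemma of_hcomp_cast_right {A B P : T} {n m m' : ℤ} (h : m = m') (f : A ⟶ B⟦n⟧) (g : B ⟶ P⟦m⟧) :
    DirectSum.of (fun k => A ⟶ P⟦k⟧) (n + m') (hcomp f (g ≫ eqToHom (by rw [h]))) =
    DirectSum.of (fun k => A ⟶ P⟦k⟧) (n + m) (hcomp f g) := by
  subst h; simp

end Toolkit

section Action

variable {R : Type*} [Ring R] {𝒜 : ℤ → AddSubgroup R}
variable {T : Type u} [Category.{v} T] [Preadditive T] [HasZeroObject T]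
  [HasShift T ℤ] [∀ n : ℤ, (CategoryTheory.shiftFunctor T n).Additive] [Pretriangulated T]
variable (hL : RLinearStructure R 𝒜 T)

set_option linter.unusedSectionVars false

lemma smul_of_homogeneous {i : ℤ} {x : R} (hx : x ∈ 𝒜 i) {A B : T} {n : ℤ} (f : A ⟶ B⟦n⟧) :
    (letI := hL.mod A B; x • DirectSum.of (fun k => A ⟶ B⟦k⟧) n f =
      DirectSum.of (fun k => A ⟶ B⟦k⟧) (n + i)
        ((x • DirectSum.of (fun k => A ⟶ B⟦k⟧) n f) (n + i))) := by
  letI := hL.mod A B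
  refine DFinsupp.ext fun m => ?_
  by_cases h : m = n + i
  · subst h; rw [DirectSum.of_eq_same]
  · rw [hL.degree hx f m h, DirectSum.of_eq_of_ne _ _ _ h]

/-- the action of a homogeneous element via precomposition with `xMul` -/
lemma smul_of_eq_xmul {i : ℤ} {x : R} (hx : x ∈ 𝒜 i) {A B : T} {m : ℤ} (h : A ⟶ B⟦m⟧) :
    (letI := hL.mod A B;
      x • DirectSum.of (fun k => A ⟶ B⟦k⟧) m h =
      DirectSum.of (fun k => A ⟶ B⟦k⟧) (i + m) (hcomp (xMul hL x i A) h)) := by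
  letI := hL.mod A B
  letI := hL.mod A A
  have key := hL.comp_smul_left hx ((shiftFunctorZero T ℤ).inv.app A) h
  simp only [Functor.id_obj, Functor.comp_obj] at key
  have l1 : hcomp ((shiftFunctorZero T ℤ).inv.app A) h = h ≫ eqToHom (by rw [zero_add]) := by
    rw [← Category.id_comp ((shiftFunctorZero T ℤ).inv.app A), hcomp_left_unit,
      Category.id_comp]
  rw [l1, ofG_cast (zero_add m).symm h] at key
  have l2 : (x • DirectSum.of (fun k => A ⟶ A⟦k⟧) 0 ((shiftFunctorZero T ℤ).inv.app A)) (0 + i) =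
      xMul hL x i A ≫ eqToHom (by rw [zero_add]) := by
    have := apply_cast (A := A) (B := A)
      (x • DirectSum.of (fun k => A ⟶ A⟦k⟧) 0 ((shiftFunctorZero T ℤ).inv.app A))
      (zero_add i).symm
    exact this
  rw [l2] at key
  rw [key, of_hcomp_cast_left (zero_add i).symm (xMul hL x i A) h]

/-- the action of a homogeneous element via postcomposition with a shift of `xMul` -/
lemma smul_of_eq_xmul' {i : ℤ} {x : R} (hx : x ∈ 𝒜 i) {A B : T} {m : ℤ} (h : A ⟶ B⟦m⟧) :
    (letI := hL.mod A B;
      x • DirectSum.of (fun k => A ⟶ B⟦k⟧) m h =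
      DirectSum.of (fun k => A ⟶ B⟦k⟧) (m + i) (hcomp h (xMul hL x i B))) := by
  letI := hL.mod A B
  letI := hL.mod B B
  have key := hL.comp_smul_right hx h ((shiftFunctorZero T ℤ).inv.app B)
  simp only [Functor.id_obj, Functor.comp_obj] at key
  rw [hcomp_right_unit, ofG_cast (add_zero m).symm h] at key
  have l2 : (x • DirectSum.of (fun k => B ⟶ B⟦k⟧) 0 ((shiftFunctorZero T ℤ).inv.app B)) (0 + i) =
      xMul hL x i B ≫ eqToHom (by rw [zero_add]) :=
    apply_cast (x • DirectSum.of (fun k => B ⟶ B⟦k⟧) 0 ((shiftFunctorZero T ℤ).inv.app B))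
      (zero_add i).symm
  rw [l2] at key
  rw [key, of_hcomp_cast_right (zero_add i).symm h (xMul hL x i B)]

/-- precomposition with a fixed morphism, as an additive map of graded Homs -/
noncomputable def precompG {A A' B : T} (e : A' ⟶ A) : GHom A B →+ GHom A' B :=
  DirectSum.toAddMonoid fun n =>
    (DirectSum.of (fun k => A' ⟶ B⟦k⟧) n).comp
      (AddMonoidHom.mk' (fun g => e ≫ g) fun g g' => Preadditive.comp_add _ _ _ _ _ _)

@[simp] lemma precompG_of {A A' B : T} (e : A' ⟶ A) (n : ℤ) (g : A ⟶ B⟦n⟧) :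
    precompG e (DirectSum.of (fun k => A ⟶ B⟦k⟧) n g) =
    DirectSum.of (fun k => A' ⟶ B⟦k⟧) n (e ≫ g) :=
  DirectSum.toAddMonoid_of _ _ _

lemma precompG_apply {A A' B : T} (e : A' ⟶ A) (v : GHom A B) (n : ℤ) :
    precompG e v n = e ≫ v n := by
  induction v using DirectSum.induction_on with
  | zero => simp
  | of j g =>
      by_cases hj : j = n
      · subst hj; rw [precompG_of, DirectSum.of_eq_same, DirectSum.of_eq_same]
      · rw [precompG_of, DirectSum.of_eq_of_ne _ _ _ (Ne.symm hj), DirectSum.of_eq_of_ne _ _ _ (Ne.symm hj),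
          Limits.comp_zero]
  | add v w hv hw =>
      rw [map_add, DirectSum.add_apply, DirectSum.add_apply, hv, hw, Preadditive.comp_add]

lemma addHom_linear [GradedRing 𝒜] {V W : Type*} [AddCommGroup V] [AddCommGroup W]
    (mV : Module R V) (mW : Module R W) (f : V →+ W)
    (hf : ∀ ⦃i : ℤ⦄ ⦃x : R⦄, x ∈ 𝒜 i → ∀ v, f (x • v) = x • f v) (r : R) (v : V) :
    f (r • v) = r • f v := by
  revert v
  refine DirectSum.Decomposition.inductionOn 𝒜 (motive := fun r => ∀ v, f (r • v) = r • f v)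
    (fun v => by rw [zero_smul, zero_smul, map_zero]) ?_ ?_ r
  · rintro i ⟨y, hy⟩ v
    exact hf hy v
  · intro a b ha hb v
    rw [add_smul, add_smul, map_add, ha, hb]

/-- precomposition with a fixed morphism, as an `R`-linear map of graded Homs -/
noncomputable def precompL [GradedRing 𝒜] {A A' B : T} (e : A' ⟶ A) :
    letI := hL.mod A B; letI := hL.mod A' B; GHom A B →ₗ[R] GHom A' B :=
  letI := hL.mod A B; letI := hL.mod A' B
  { toFun := precompG e
    map_add' := map_add _
    map_smul' := by
      intro r v
      refine addHom_linear (𝒜 := 𝒜) (hL.mod A B) (hL.mod A' B) (precompG e) ?_ r v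
      intro i x hx w
      induction w using DirectSum.induction_on with
      | zero => rw [smul_zero, map_zero, smul_zero]
      | of j g =>
          rw [smul_of_eq_xmul' hL hx g, precompG_of, precompG_of,
            smul_of_eq_xmul' hL hx (e ≫ g)]
          congr 1
          dsimp [hcomp]
          rw [Category.assoc]
      | add a b ha hb => rw [smul_add, map_add, map_add, smul_add, ha, hb] }

@[simp] lemma precompL_apply [GradedRing 𝒜] {A A' B : T} (e : A' ⟶ A) (v : GHom A B) :
    precompL hL e v = precompG e v := rfl

end Action

section TriangleLemmas

variable {R : Type*} [Ring R] {𝒜 : ℤ → AddSubgroup R}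
variable {T : Type u} [Category.{v} T] [Preadditive T] [HasZeroObject T]
  [HasShift T ℤ] [∀ n : ℤ, (CategoryTheory.shiftFunctor T n).Additive] [Pretriangulated T]
variable (hL : RLinearStructure R 𝒜 T)

set_option linter.unusedSectionVars false

/-- if `x•` is injective on `Hom*(B, M)` then precomposition with `xMul x i B` is injective -/
lemma chi_inj {i : ℤ} {x : R} (hx : x ∈ 𝒜 i) {B M : T}
    (hinj : letI := hL.mod B M; ∀ v : GHom B M, x • v = 0 → v = 0)
    {m : ℤ} (q : B⟦i⟧ ⟶ M⟦m⟧) (hq : xMul hL x i B ≫ q = 0) : q = 0 := by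
  letI := hL.mod B M
  have e1 : i + (m - i) = m := by ring
  set m' := m - i with hm'
  set q₂ : B⟦i⟧ ⟶ M⟦i + m'⟧ := q ≫ eqToHom (by rw [e1]) with hq₂
  obtain ⟨h, hh⟩ := (shiftFunctor T i).map_surjective
    (q₂ ≫ (shiftFunctorAdd' T m' i (i + m') (add_comm m' i)).hom.app M)
  have hβ : hcomp (xMul hL x i B) h = 0 := by
    dsimp [hcomp]
    rw [hh]
    simp only [Category.assoc, Iso.hom_inv_id_app]
    rw [hq₂]
    simp only [Category.comp_id, ← Category.assoc]
    rw [hq, Limits.zero_comp]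
  have h0 : (letI := hL.mod B M; x • DirectSum.of (fun k => B ⟶ M⟦k⟧) m' h = 0) := by
    rw [smul_of_eq_xmul hL hx h, hβ, map_zero]
  have h1 : h = 0 := by
    have := hinj _ h0
    exact DirectSum.of_injective (β := fun k => B ⟶ M⟦k⟧) m' (by rw [this, map_zero])
  have hq₂0 : q₂ = 0 := by
    have : q₂ = h⟦i⟧' ≫ (shiftFunctorAdd' T m' i (i + m') (add_comm m' i)).inv.app M := by
      rw [hh]; simp
    rw [this, h1, Functor.map_zero, Limits.zero_comp]
  have hqq : q = q₂ ≫ eqToHom (show M⟦i + m'⟧ = M⟦m⟧ by rw [e1]) := by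
    rw [hq₂]; simp
  rw [hqq, hq₂0, Limits.zero_comp]

/-- kernel of precomposition with `ε` consists of `x`-multiples -/
lemma ker_step {i : ℤ} {x : R} (hx : x ∈ 𝒜 i) {A B M : T}
    (ε : A ⟶ B) (δ : B⟦i⟧ ⟶ A⟦(1:ℤ)⟧)
    (hΔ : Triangle.mk ε (xMul hL x i B) δ ∈ distTriang T)
    {m : ℤ} (g : B ⟶ M⟦m⟧) (hg : ε ≫ g = 0) :
    ∃ (m' : ℤ) (h : B ⟶ M⟦m'⟧), (letI := hL.mod B M;
      DirectSum.of (fun k => B ⟶ M⟦k⟧) m g = x • DirectSum.of (fun k => B ⟶ M⟦k⟧) m' h) := by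
  letI := hL.mod B M
  obtain ⟨q, hq⟩ := Triangle.yoneda_exact₂ _ hΔ g hg
  have e1 : i + (m - i) = m := by ring
  set m' := m - i with hm'
  set q₂ : B⟦i⟧ ⟶ M⟦i + m'⟧ := q ≫ eqToHom (by rw [e1]) with hq₂
  obtain ⟨h, hh⟩ := (shiftFunctor T i).map_surjective
    (q₂ ≫ (shiftFunctorAdd' T m' i (i + m') (add_comm m' i)).hom.app M)
  refine ⟨m', h, ?_⟩
  rw [smul_of_eq_xmul hL hx h]
  have hβ : hcomp (xMul hL x i B) h = g ≫ eqToHom (show M⟦m⟧ = M⟦i + m'⟧ by rw [e1]) := by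
    dsimp [hcomp]
    rw [hh]
    simp only [Category.assoc, Iso.hom_inv_id_app, Category.comp_id]
    rw [hq₂, hq]
    simp
    exact (Category.assoc _ _ _).symm
  rw [hβ, ofG_cast e1.symm g]

/-- surjectivity of precomposition with `ε` on graded Homs into `M` -/
lemma surj_step {i : ℤ} {x : R} (hx : x ∈ 𝒜 i) {A B M : T}
    (ε : A ⟶ B) (δ : B⟦i⟧ ⟶ A⟦(1:ℤ)⟧)
    (hΔ : Triangle.mk ε (xMul hL x i B) δ ∈ distTriang T)
    (hinj : letI := hL.mod B M; ∀ v : GHom B M, x • v = 0 → v = 0)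
    {m : ℤ} (f : A ⟶ M⟦m⟧) : ∃ g : B ⟶ M⟦m⟧, ε ≫ g = f := by
  have hΔr := rot_of_distTriang _ (rot_of_distTriang _ hΔ)
  have hzero : δ ≫ (f⟦(1:ℤ)⟧' ≫ (shiftFunctorAdd' T m 1 (m+1) rfl).inv.app M) = 0 := by
    apply chi_inj hL hx hinj
    rw [← Category.assoc]
    have h0 : xMul hL x i B ≫ δ = 0 := comp_distTriang_mor_zero₂₃ _ hΔ
    rw [h0, Limits.zero_comp]
  have hδ : δ ≫ f⟦(1:ℤ)⟧' = 0 := by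
    rw [← cancel_mono ((shiftFunctorAdd' T m 1 (m+1) rfl).inv.app M), Category.assoc, hzero,
      Limits.zero_comp]
  obtain ⟨q, hq⟩ : ∃ q : B⟦(1:ℤ)⟧ ⟶ (M⟦m⟧)⟦(1:ℤ)⟧, f⟦(1:ℤ)⟧' = (-(ε⟦(1:ℤ)⟧')) ≫ q :=
    Triangle.yoneda_exact₂ _ hΔr (f⟦(1:ℤ)⟧') hδ
  obtain ⟨g, hg⟩ : ∃ g : B ⟶ M⟦m⟧, g⟦(1:ℤ)⟧' = -q := (shiftFunctor T (1:ℤ)).map_surjective (-q)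
  refine ⟨g, (shiftFunctor T (1:ℤ)).map_injective ?_⟩
  have hq' : f⟦(1:ℤ)⟧' = (-(ε⟦(1:ℤ)⟧')) ≫ q := hq
  rw [Functor.map_comp, hg, hq']
  simp

end TriangleLemmas

section SpanLemmas

variable {R : Type*} [Ring R] {N : Type*} [AddCommGroup N] [Module R N]

lemma smulSetSpan_empty : smulSetSpan N (∅ : Set R) = ⊥ := by
  have h : {ν : N | ∃ x ∈ (∅ : Set R), ∃ m : N, ν = x • m} = ∅ := by simp
  rw [smulSetSpan, h, Submodule.span_empty]

lemma smulSetSpan_union (S₁ S₂ : Set R) :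
    smulSetSpan N (S₁ ∪ S₂) = smulSetSpan N S₁ ⊔ smulSetSpan N S₂ := by
  rw [smulSetSpan, smulSetSpan, smulSetSpan, ← Submodule.span_union]
  congr 1
  ext ν
  constructor
  · rintro ⟨y, hy | hy, m, rfl⟩
    · exact Or.inl ⟨y, hy, m, rfl⟩
    · exact Or.inr ⟨y, hy, m, rfl⟩
  · rintro (⟨y, hy, m, rfl⟩ | ⟨y, hy, m, rfl⟩)
    · exact ⟨y, Or.inl hy, m, rfl⟩
    · exact ⟨y, Or.inr hy, m, rfl⟩

lemma smulSetSpan_mono {S₁ S₂ : Set R} (h : S₁ ⊆ S₂) :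
    smulSetSpan N S₁ ≤ smulSetSpan N S₂ := by
  apply Submodule.span_mono
  rintro ν ⟨y, hy, m, rfl⟩
  exact ⟨y, h hy, m, rfl⟩

lemma smul_mem_smulSetSpan {x : R} {S : Set R} (hx : x ∈ S) (ν : N) :
    x • ν ∈ smulSetSpan N S :=
  Submodule.subset_span ⟨x, hx, ν, rfl⟩

end SpanLemmas

section Steps

variable {R : Type*} [Ring R] {𝒜 : ℤ → AddSubgroup R}
variable {T : Type u} [Category.{v} T] [Preadditive T] [HasZeroObject T]
  [HasShift T ℤ] [∀ n : ℤ, (CategoryTheory.shiftFunctor T n).Additive] [Pretriangulated T]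

set_option linter.unusedSectionVars false
set_option maxHeartbeats 1000000

/-- the inductive statement: `Hom*(K s, K 0) ≅ Hom*(K 0, K 0)/(x_0,…,x_{s-1})`,
compatibly with homogeneous elements and the canonical morphism. -/
def StepProp (hL : RLinearStructure R 𝒜 T) (K : ℕ → T) (ε : ∀ s : ℕ, K (s + 1) ⟶ K s)
    (x : ℕ → R) (s : ℕ) : Prop :=
  letI := hL.mod (K s) (K 0)
  letI := hL.mod (K 0) (K 0)
  ∃ e : GHom (K s) (K 0) ≃ₗ[R]
      (GHom (K 0) (K 0) ⧸ smulSetSpan (GHom (K 0) (K 0)) (x '' {s' : ℕ | s' < s})),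
    (∀ (m : ℤ) (f : K s ⟶ (K 0)⟦m⟧), ∃ g : K 0 ⟶ (K 0)⟦m⟧,
        e (DirectSum.of (fun k => K s ⟶ (K 0)⟦k⟧) m f) =
          Submodule.Quotient.mk (DirectSum.of (fun k => K 0 ⟶ (K 0)⟦k⟧) m g)) ∧
    (∀ (m : ℤ) (g : K 0 ⟶ (K 0)⟦m⟧), ∃ f : K s ⟶ (K 0)⟦m⟧,
        e (DirectSum.of (fun k => K s ⟶ (K 0)⟦k⟧) m f) =
          Submodule.Quotient.mk (DirectSum.of (fun k => K 0 ⟶ (K 0)⟦k⟧) m g)) ∧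
    e (DirectSum.of (fun k => K s ⟶ (K 0)⟦k⟧) 0
        (chainComp K ε s ≫ (shiftFunctorZero T ℤ).inv.app (K 0))) =
      Submodule.Quotient.mk (idG (K 0))

lemma stepProp_zero (hL : RLinearStructure R 𝒜 T) (K : ℕ → T)
    (ε : ∀ s : ℕ, K (s + 1) ⟶ K s) (x : ℕ → R) : StepProp hL K ε x 0 := by
  unfold StepProp
  letI := hL.mod (K 0) (K 0)
  have hI0 : smulSetSpan (GHom (K 0) (K 0)) (x '' {s' : ℕ | s' < 0}) = ⊥ := by
    have h : x '' {s' : ℕ | s' < 0} = ∅ := by simp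
    rw [h, smulSetSpan_empty]
  set L := (smulSetSpan (GHom (K 0) (K 0)) (x '' {s' : ℕ | s' < 0})).mkQ with hLdef
  have hbij : Function.Bijective L := by
    constructor
    · rw [← LinearMap.ker_eq_bot, hLdef, Submodule.ker_mkQ, hI0]
    · exact Submodule.mkQ_surjective _
  refine ⟨LinearEquiv.ofBijective L hbij, fun m f => ⟨f, by simp [hLdef]⟩,
    fun m g => ⟨g, by simp [hLdef]⟩, ?_⟩
  have hc : chainComp K ε 0 ≫ (shiftFunctorZero T ℤ).inv.app (K 0) =
      (shiftFunctorZero T ℤ).inv.app (K 0) := by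
    rw [show chainComp K ε 0 = 𝟙 (K 0) from rfl, Category.id_comp]
  rw [hc]
  show L (DirectSum.of (fun k => K 0 ⟶ (K 0)⟦k⟧) 0 ((shiftFunctorZero T ℤ).inv.app (K 0))) = _
  rw [show DirectSum.of (fun k => K 0 ⟶ (K 0)⟦k⟧) 0 ((shiftFunctorZero T ℤ).inv.app (K 0)) =
    idG (K 0) from rfl]
  simp [hLdef]

lemma stepProp_succ [GradedRing 𝒜] (hL : RLinearStructure R 𝒜 T) (K : ℕ → T)
    (ε : ∀ s : ℕ, K (s + 1) ⟶ K s) (x : ℕ → R) (s : ℕ) {i : ℤ}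
    (hx : x s ∈ 𝒜 i) (δ : (K s)⟦i⟧ ⟶ (K (s + 1))⟦(1 : ℤ)⟧)
    (hΔ : Triangle.mk (ε s) (xMul hL (x s) i (K s)) δ ∈ distTriang T)
    (hregel : letI := hL.mod (K 0) (K 0); ∀ ν : GHom (K 0) (K 0),
      x s • ν ∈ smulSetSpan (GHom (K 0) (K 0)) (x '' {s' : ℕ | s' < s}) →
      ν ∈ smulSetSpan (GHom (K 0) (K 0)) (x '' {s' : ℕ | s' < s}))
    (ih : StepProp hL K ε x s) : StepProp hL K ε x (s + 1) := by
  unfold StepProp at ih ⊢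
  letI := hL.mod (K s) (K 0)
  letI := hL.mod (K (s + 1)) (K 0)
  letI := hL.mod (K 0) (K 0)
  set Is := smulSetSpan (GHom (K 0) (K 0)) (x '' {s' : ℕ | s' < s}) with hIsdef
  set Is1 := smulSetSpan (GHom (K 0) (K 0)) (x '' {s' : ℕ | s' < s + 1}) with hIs1def
  obtain ⟨e, P1, P2, P3⟩ := ih
  have himgsucc : x '' {s' : ℕ | s' < s + 1} = x '' {s' : ℕ | s' < s} ∪ {x s} := by
    rw [show {s' : ℕ | s' < s + 1} = {s' : ℕ | s' < s} ∪ {s} by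
      ext s'; simp only [Set.mem_setOf_eq, Set.mem_union, Set.mem_singleton_iff, Nat.lt_succ_iff_lt_or_eq], Set.image_union, Set.image_singleton]
  have hIsucc : Is1 = Is ⊔ smulSetSpan (GHom (K 0) (K 0)) {x s} := by
    rw [hIs1def, himgsucc, smulSetSpan_union]
  have hle : Is ≤ Is1 := by
    rw [hIsucc]; exact le_sup_left
  -- injectivity of x s on GHom (K s) (K 0)
  have hinj : ∀ v : GHom (K s) (K 0), x s • v = 0 → v = 0 := by
    intro v hv
    obtain ⟨μ, hμ⟩ := Submodule.Quotient.mk_surjective Is (e v)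
    have h1 : x s • e v = 0 := by rw [← map_smul, hv, map_zero]
    rw [← hμ, ← Submodule.Quotient.mk_smul] at h1
    have h2 : x s • μ ∈ Is := (Submodule.Quotient.mk_eq_zero _).mp h1
    have h3 : e v = 0 := by
      rw [← hμ, Submodule.Quotient.mk_eq_zero]
      exact hregel μ h2
    exact (LinearEquiv.map_eq_zero_iff e).mp h3
  -- the precomposition map
  set Φ : GHom (K s) (K 0) →ₗ[R] GHom (K (s + 1)) (K 0) := precompL hL (ε s) with hΦdef
  have hΦof : ∀ (m : ℤ) (g : K s ⟶ (K 0)⟦m⟧),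
      Φ (DirectSum.of (fun k => K s ⟶ (K 0)⟦k⟧) m g) =
      DirectSum.of (fun k => K (s + 1) ⟶ (K 0)⟦k⟧) m (ε s ≫ g) := by
    intro m g
    rw [hΦdef, precompL_apply, precompG_of]
  have hsurjΦ : Function.Surjective Φ := by
    intro w
    induction w using DirectSum.induction_on with
    | zero => exact ⟨0, map_zero _⟩
    | of m f =>
        obtain ⟨g, hg⟩ := surj_step hL hx (ε s) δ hΔ hinj f
        exact ⟨DirectSum.of (fun k => K s ⟶ (K 0)⟦k⟧) m g, by rw [hΦof, hg]⟩
    | add a b ha hb =>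
        obtain ⟨va, hva⟩ := ha; obtain ⟨vb, hvb⟩ := hb
        exact ⟨va + vb, by rw [map_add, hva, hvb]⟩
  have hker1 : ∀ v : GHom (K s) (K 0), Φ (x s • v) = 0 := by
    intro v
    induction v using DirectSum.induction_on with
    | zero => rw [smul_zero, map_zero]
    | of m h =>
        rw [smul_of_eq_xmul hL hx h, hΦof]
        have hz : ε s ≫ hcomp (xMul hL (x s) i (K s)) h = 0 := by
          dsimp [hcomp]
          rw [← Category.assoc]
          rw [show ε s ≫ xMul hL (x s) i (K s) = 0 from comp_distTriang_mor_zero₁₂ _ hΔ]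
          rw [Limits.zero_comp]
        rw [hz, map_zero]
    | add a b ha hb => rw [smul_add, map_add, ha, hb, add_zero]
  have hkerΦ : LinearMap.ker Φ = smulSetSpan (GHom (K s) (K 0)) {x s} := by
    apply le_antisymm
    · intro v hv
      rw [LinearMap.mem_ker] at hv
      classical
      rw [← DirectSum.sum_support_of (x := v)]
      refine Submodule.sum_mem _ fun m _ => ?_
      have hcomp0 : ε s ≫ v m = 0 := by
        have h := precompG_apply (ε s) v m
        rw [show precompG (ε s) v = Φ v from (precompL_apply hL (ε s) v).symm, hv] at h
        rw [← h]
        exact DFinsupp.zero_apply _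
      obtain ⟨m', h, hxh⟩ := ker_step hL hx (ε s) δ hΔ (v m) hcomp0
      rw [hxh]
      exact smul_mem_smulSetSpan (Set.mem_singleton _) _
    · rw [smulSetSpan, Submodule.span_le]
      rintro ν ⟨y, hy, w, rfl⟩
      rw [Set.mem_singleton_iff] at hy; subst hy
      rw [SetLike.mem_coe, LinearMap.mem_ker]
      exact hker1 w
  -- the map to the quotient
  set θ : GHom (K s) (K 0) →ₗ[R] (GHom (K 0) (K 0) ⧸ Is1) :=
    (Submodule.mapQ Is Is1 LinearMap.id (by simpa using hle)).comp e.toLinearMap with hθdef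
  have hθ_mk : ∀ (v : GHom (K s) (K 0)) (μ : GHom (K 0) (K 0)),
      e v = Submodule.Quotient.mk μ → θ v = Submodule.Quotient.mk μ := by
    intro v μ hμ
    rw [hθdef, LinearMap.comp_apply]
    show Submodule.mapQ Is Is1 LinearMap.id _ (e v) = _
    rw [hμ, Submodule.mapQ_apply, LinearMap.id_apply]
  have hθsurj : Function.Surjective θ := by
    intro z
    obtain ⟨μ, rfl⟩ := Submodule.Quotient.mk_surjective _ z
    refine ⟨e.symm (Submodule.Quotient.mk μ), ?_⟩
    exact hθ_mk _ _ (e.apply_symm_apply _)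
  have hθker_le : LinearMap.ker θ ≤ LinearMap.ker Φ := by
    intro v hv
    rw [LinearMap.mem_ker] at hv
    obtain ⟨μ, hμ⟩ := Submodule.Quotient.mk_surjective Is (e v)
    have hmapq : (Submodule.Quotient.mk μ : GHom (K 0) (K 0) ⧸ Is1) = 0 := by
      rw [← hθ_mk v μ hμ.symm]; exact hv
    have hμmem : μ ∈ Is1 := (Submodule.Quotient.mk_eq_zero _).mp hmapq
    rw [hIsucc] at hμmem
    obtain ⟨μ₁, hμ₁, μ₂, hμ₂, hsum⟩ := Submodule.mem_sup.mp hμmem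
    have hmk : e v = Submodule.Quotient.mk μ₂ := by
      rw [← hμ, ← hsum]
      rw [show (Submodule.Quotient.mk (μ₁ + μ₂) : GHom (K 0) (K 0) ⧸ Is) =
        Submodule.Quotient.mk μ₁ + Submodule.Quotient.mk μ₂ from rfl]
      rw [(Submodule.Quotient.mk_eq_zero _).mpr hμ₁, zero_add]
    set L : GHom (K 0) (K 0) →ₗ[R] GHom (K s) (K 0) :=
      e.symm.toLinearMap.comp Is.mkQ with hLdef
    have himage : Submodule.map L (smulSetSpan (GHom (K 0) (K 0)) {x s}) ≤
        smulSetSpan (GHom (K s) (K 0)) {x s} := by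
      rw [show smulSetSpan (GHom (K 0) (K 0)) {x s} =
        Submodule.span R {ν : GHom (K 0) (K 0) | ∃ y ∈ ({x s} : Set R), ∃ m, ν = y • m}
        from rfl]
      rw [Submodule.map_span, Submodule.span_le]
      rintro ν' ⟨ν, ⟨y, hy, w, rfl⟩, rfl⟩
      rw [Set.mem_singleton_iff] at hy; subst hy
      rw [map_smul]
      exact SetLike.mem_coe.mpr (smul_mem_smulSetSpan (Set.mem_singleton _) _)
    have hvL : v = L μ₂ := by
      rw [hLdef, LinearMap.comp_apply, Submodule.mkQ_apply]
      show v = e.symm (Submodule.Quotient.mk μ₂)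
      rw [← hmk, e.symm_apply_apply]
    rw [hkerΦ, hvL]
    exact himage ⟨μ₂, hμ₂, rfl⟩
  have hkerΦ_le_θ : LinearMap.ker Φ ≤ LinearMap.ker θ := by
    rw [hkerΦ, smulSetSpan, Submodule.span_le]
    rintro ν ⟨y, hy, w, rfl⟩
    rw [Set.mem_singleton_iff] at hy; subst hy
    rw [SetLike.mem_coe, LinearMap.mem_ker, map_smul]
    obtain ⟨μ, hμ⟩ := Submodule.Quotient.mk_surjective Is1 (θ w)
    rw [← hμ, ← Submodule.Quotient.mk_smul, Submodule.Quotient.mk_eq_zero, hIs1def]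
    exact smul_mem_smulSetSpan (x := x s) (S := x '' {s' : ℕ | s' < s + 1})
      ⟨s, Nat.lt_succ_self s, rfl⟩ μ
  -- assemble the equivalence
  set E1 := LinearMap.quotKerEquivOfSurjective Φ hsurjΦ with hE1def
  set L2 := (LinearMap.ker Φ).liftQ θ hkerΦ_le_θ with hL2def
  have hL2bij : Function.Bijective L2 := by
    constructor
    · rw [← LinearMap.ker_eq_bot, hL2def]
      exact Submodule.ker_liftQ_eq_bot _ _ _ hθker_le
    · intro z
      obtain ⟨w, hw⟩ := hθsurj z
      exact ⟨Submodule.Quotient.mk w, by rwa [hL2def, Submodule.liftQ_apply]⟩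
  set E2 := LinearEquiv.ofBijective L2 hL2bij with hE2def
  have key : ∀ w : GHom (K s) (K 0), (E1.symm.trans E2) (Φ w) = θ w := by
    intro w
    have h1 : E1 (Submodule.Quotient.mk w) = Φ w := rfl
    have h2 : E1.symm (Φ w) = Submodule.Quotient.mk w := by
      rw [← h1, LinearEquiv.symm_apply_apply]
    rw [LinearEquiv.trans_apply, h2, hE2def]
    show L2 (Submodule.Quotient.mk w) = θ w
    rw [hL2def, Submodule.liftQ_apply]
  refine ⟨E1.symm.trans E2, ?_, ?_, ?_⟩
  · intro m f
    obtain ⟨g₀, hg₀⟩ := surj_step hL hx (ε s) δ hΔ hinj f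
    obtain ⟨g, hg⟩ := P1 m g₀
    refine ⟨g, ?_⟩
    rw [show DirectSum.of (fun k => K (s + 1) ⟶ (K 0)⟦k⟧) m f =
      Φ (DirectSum.of (fun k => K s ⟶ (K 0)⟦k⟧) m g₀) by rw [hΦof, hg₀]]
    rw [key]
    exact hθ_mk _ _ hg
  · intro m g
    obtain ⟨g₀, hg₀⟩ := P2 m g
    refine ⟨ε s ≫ g₀, ?_⟩
    rw [show DirectSum.of (fun k => K (s + 1) ⟶ (K 0)⟦k⟧) m (ε s ≫ g₀) =
      Φ (DirectSum.of (fun k => K s ⟶ (K 0)⟦k⟧) m g₀) by rw [hΦof]]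
    rw [key]
    exact hθ_mk _ _ hg₀
  · have hch : chainComp K ε (s + 1) = ε s ≫ chainComp K ε s := rfl
    rw [show DirectSum.of (fun k => K (s + 1) ⟶ (K 0)⟦k⟧) 0
        (chainComp K ε (s + 1) ≫ (shiftFunctorZero T ℤ).inv.app (K 0)) =
      Φ (DirectSum.of (fun k => K s ⟶ (K 0)⟦k⟧) 0
        (chainComp K ε s ≫ (shiftFunctorZero T ℤ).inv.app (K 0))) by
        rw [hΦof, hch, Category.assoc]]
    rw [key]
    exact hθ_mk _ _ P3

end Steps

set_option maxHeartbeats 1000000 in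
/-- `Hom*_T(Σ^{-t}(M//(x₁,…,x_t)), M) ≅ 𝓜/(x₁,…,x_t)𝓜` as graded
`R`-modules, identifying the canonical morphism with `[id_M]`. -/
theorem hom_kos_iso_quotient
    (R : Type*) [Ring R] (𝒜 : ℤ → AddSubgroup R) [GradedRing 𝒜]
    (hgc : IsGradedComm R 𝒜)
    (T : Type u) [Category.{v} T] [Preadditive T] [HasZeroObject T] [HasShift T ℤ]
    [∀ n : ℤ, (CategoryTheory.shiftFunctor T n).Additive] [Pretriangulated T]
    (hL : RLinearStructure R 𝒜 T)
    (M : T) (t : ℕ) (x : ℕ → R) (d : ℕ → ℤ) (hx : ∀ s < t, x s ∈ 𝒜 (d s))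
    (hreg : letI := hL.mod M M; IsRegSeqOn (GHom M M) ((List.range t).map x))
    (K : ℕ → T) (hK0 : K 0 = M)
    (ε : ∀ s : ℕ, K (s + 1) ⟶ K s)
    (δ : ∀ s : ℕ, (K s)⟦d s⟧ ⟶ (K (s + 1))⟦(1 : ℤ)⟧)
    (htri : ∀ s < t,
      Triangle.mk (ε s) (xMul hL (x s) (d s) (K s)) (δ s) ∈ (distTriang T)) :
    letI := hL.mod (K t) M
    letI := hL.mod M M
    ∃ e : GHom (K t) M ≃ₗ[R]
        (GHom M M ⧸ smulSetSpan (GHom M M) (x '' {s : ℕ | s < t})),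
      (∀ (m : ℤ) (f : K t ⟶ M⟦m⟧), ∃ g : M ⟶ M⟦m⟧,
          e (DirectSum.of (fun k => K t ⟶ M⟦k⟧) m f) =
            Submodule.Quotient.mk (DirectSum.of (fun k => M ⟶ M⟦k⟧) m g)) ∧
      (∀ (m : ℤ) (g : M ⟶ M⟦m⟧), ∃ f : K t ⟶ M⟦m⟧,
          e (DirectSum.of (fun k => K t ⟶ M⟦k⟧) m f) =
            Submodule.Quotient.mk (DirectSum.of (fun k => M ⟶ M⟦k⟧) m g)) ∧
      e (DirectSum.of (fun k => K t ⟶ M⟦k⟧) 0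
          (chainComp K ε t ≫ eqToHom hK0 ≫ (shiftFunctorZero T ℤ).inv.app M)) =
        Submodule.Quotient.mk (idG M) := by
  subst hK0
  letI := hL.mod (K t) (K 0)
  letI := hL.mod (K 0) (K 0)
  -- the chain of ideals
  have hI0 : smulSetSpan (GHom (K 0) (K 0)) (x '' {s' : ℕ | s' < 0}) = ⊥ := by
    have h : x '' {s' : ℕ | s' < 0} = ∅ := by simp
    rw [h, smulSetSpan_empty]
  have hIsucc : ∀ s : ℕ,
      smulSetSpan (GHom (K 0) (K 0)) (x '' {s' : ℕ | s' < s + 1}) =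
      smulSetSpan (GHom (K 0) (K 0)) (x '' {s' : ℕ | s' < s}) ⊔
        smulSetSpan (GHom (K 0) (K 0)) {x s} := by
    intro s
    rw [show x '' {s' : ℕ | s' < s + 1} = x '' {s' : ℕ | s' < s} ∪ {x s} by
      rw [show {s' : ℕ | s' < s + 1} = {s' : ℕ | s' < s} ∪ {s} by
        ext s'
        simp only [Set.mem_setOf_eq, Set.mem_union, Set.mem_singleton_iff,
          Nat.lt_succ_iff_lt_or_eq], Set.image_union, Set.image_singleton]]
    rw [smulSetSpan_union]
  -- the regularity chain
  have hreg' : ∀ s : ℕ, s ≤ t →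
      IsRegSeqFrom (GHom (K 0) (K 0))
        (smulSetSpan (GHom (K 0) (K 0)) (x '' {s' : ℕ | s' < s}))
        ((List.range (t - s)).map fun k => x (s + k)) := by
    intro s
    induction s with
    | zero =>
      intro _
      have hl : ((List.range (t - 0)).map fun k => x (0 + k)) = (List.range t).map x := by
        rw [Nat.sub_zero]
        exact List.map_congr_left fun a _ => by rw [Nat.zero_add]
      rw [hl, hI0]
      exact hreg
    | succ s ih =>
      intro hst
      have hs : s ≤ t := Nat.le_of_succ_le hst
      have H := ih hs
      have harith : t - s = (t - (s + 1)) + 1 := by omega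
      rw [harith, List.range_succ_eq_map, List.map_cons, List.map_map] at H
      obtain ⟨h1, h2⟩ := H
      have hfn : ((fun k => x (s + k)) ∘ Nat.succ) = fun k => x ((s + 1) + k) := by
        funext k
        simp only [Function.comp_apply]
        congr 1
        omega
      rw [hfn] at h2
      rw [hIsucc s]
      exact h2
  have hregel : ∀ s : ℕ, s < t → ∀ ν : GHom (K 0) (K 0),
      x s • ν ∈ smulSetSpan (GHom (K 0) (K 0)) (x '' {s' : ℕ | s' < s}) →
      ν ∈ smulSetSpan (GHom (K 0) (K 0)) (x '' {s' : ℕ | s' < s}) := by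
    intro s hst
    have H := hreg' s (Nat.le_of_lt hst)
    have harith : t - s = (t - (s + 1)) + 1 := by omega
    rw [harith, List.range_succ_eq_map, List.map_cons] at H
    exact H.1
  -- the induction
  have main : ∀ s : ℕ, s ≤ t → StepProp hL K ε x s := by
    intro s
    induction s with
    | zero => intro _; exact stepProp_zero hL K ε x
    | succ s ih =>
      intro hst
      have hs : s < t := Nat.lt_of_succ_le hst
      exact stepProp_succ hL K ε x s (hx s hs) (δ s) (htri s hs) (hregel s hs)
        (ih (Nat.le_of_lt hs))
  have hfinal := main t le_rfl
  unfold StepProp at hfinal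
  simp only [eqToHom_refl, Category.id_comp]
  exact hfinal
end

section
/- Let R be a commutative ring, N an R-module, and x_1, …, x_t ∈ R an N-regular sequence. Let ν ∈ N with ν ∉ (x_1,…,x_t)N. Then for all integers n_1, …, n_t ≥ 0 one has x_1^{n_1}⋯x_t^{n_t}·ν ∉ (x_1^{n_1+1}, …, x_t^{n_t+1})N; that is, the class [x_1^{n_1}⋯x_t^{n_t}·ν] is non-zero in N/(x_1^{n_1+1}, …, x_t^{n_t+1})N. -/
/-!
Statement 10: Let `R` be a commutative ring, `N` an `R`-module, and `x₁, …, x_t ∈ R` an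
`N`-regular sequence (i.e. `x₁` is a non-zerodivisor on `N` and each `xᵢ` is a
non-zerodivisor on `N/(x₁,…,xᵢ₋₁)N`). If `ν ∈ N` with `ν ∉ (x₁,…,x_t)N`, then for all
`n₁, …, n_t ≥ 0` one has `x₁^{n₁} ⋯ x_t^{n_t} • ν ∉ (x₁^{n₁+1}, …, x_t^{n_t+1})N`.
-/

section Core
variable {R : Type*} [CommRing R] {N : Type*} [AddCommGroup N] [Module R N]

/-- `a • N` as a submodule, via ideal smul. -/
def aT (N : Type*) [AddCommGroup N] [Module R N] (a : R) : Submodule R N :=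
  Ideal.span {a} • ⊤

lemma mem_aT {a : R} {n : N} : n ∈ aT N a ↔ ∃ m, a • m = n := by
  constructor
  · intro h
    refine Submodule.smul_induction_on h (fun r hr m _ => ?_) ?_
    · rcases Ideal.mem_span_singleton'.mp hr with ⟨c, rfl⟩
      exact ⟨c • m, by rw [smul_comm, smul_smul]⟩
    · rintro x y ⟨m, rfl⟩ ⟨m', rfl⟩; exact ⟨m + m', by rw [smul_add]⟩
  · rintro ⟨m, rfl⟩
    exact Submodule.smul_mem_smul (Ideal.mem_span_singleton_self a) trivial

lemma aT_smul_mem {a : R} (m : N) : a • m ∈ aT N a := mem_aT.mpr ⟨m, rfl⟩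

/-- span of a list, smul ⊤. -/
def sm (N : Type*) [AddCommGroup N] [Module R N] (l : List R) : Submodule R N :=
  Ideal.span {r | r ∈ l} • ⊤

lemma sm_nil : sm N ([] : List R) = ⊥ := by
  have : {r : R | r ∈ ([] : List R)} = ∅ := by ext r; simp
  rw [sm, this, Ideal.span_empty, Submodule.bot_smul]

lemma sm_cons {a : R} {l : List R} : sm N (a :: l) = aT N a ⊔ sm N l := by
  have : {r : R | r ∈ a :: l} = insert a {r | r ∈ l} := by ext r; simp
  rw [sm, this, Ideal.span_insert, Submodule.sup_smul]; rfl

lemma sm_append {u v : List R} : sm N (u ++ v) = sm N u ⊔ sm N v := by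
  induction u with
  | nil => rw [List.nil_append, sm_nil, bot_sup_eq]
  | cons a u ih => rw [List.cons_append, sm_cons, ih, sm_cons, sup_assoc]

/-- `l` is a regular sequence on `N ⧸ S`, phrased via memberships in `N`. -/
def RegOn (S : Submodule R N) : List R → Prop
  | [] => True
  | a :: l => (∀ n : N, a • n ∈ S → n ∈ S) ∧ RegOn (S ⊔ aT N a) l

lemma RegOn.prefix {S : Submodule R N} : ∀ {l l' : List R}, RegOn S (l ++ l') → RegOn S l := by
  intro l
  induction l generalizing S with
  | nil => intro _ _; trivial
  | cons a l ih => intro l' h; exact ⟨h.1, ih h.2⟩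

/-- non-zero-divisor property of a middle element w.r.t. earlier base. -/
lemma RegOn.nzd_middle {S : Submodule R N} :
    ∀ {L : List R} {b : R} {rest : List R}, RegOn S (L ++ b :: rest) →
      ∀ n : N, b • n ∈ S ⊔ sm N L → n ∈ S ⊔ sm N L := by
  intro L
  induction L generalizing S with
  | nil =>
    intro b rest h n hn
    rw [sm_nil, sup_bot_eq] at hn ⊢
    exact h.1 n hn
  | cons c L ih =>
    intro b rest h n hn
    rw [sm_cons, ← sup_assoc] at hn ⊢
    exact ih h.2 n hn
end Core

section Pow
variable {R : Type*} [CommRing R] {N : Type*} [AddCommGroup N] [Module R N]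

/-- Transfer of regularity along `N/S₁ →(·a) N/S₂ → N/S₃` (elementwise form of the
    three-module lemma for short exact sequences). -/
lemma regOn_of_sandwich {a : R} :
    ∀ {l : List R} {S₁ S₂ S₃ : Submodule R N}
      (_ : ∀ n ∈ S₁, a • n ∈ S₂)
      (_ : ∀ n : N, a • n ∈ S₂ → n ∈ S₁)
      (_ : S₂ ≤ S₃)
      (_ : ∀ n ∈ S₃, ∃ m, n - a • m ∈ S₂)
      (_ : ∀ n : N, a • n ∈ S₃)
      (_ : RegOn S₁ l) (_ : RegOn S₃ l), RegOn S₂ l := by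
  intro l
  induction l with
  | nil => intro _ _ _ _ _ _ _ _ _ _; trivial
  | cons y l ih =>
    intro S₁ S₂ S₃ haS hf hg hker hfg hA hC
    constructor
    · -- y is NZD mod S₂
      intro n hn
      have hn3 : n ∈ S₃ := hC.1 n (hg hn)
      obtain ⟨m, hm⟩ := hker n hn3
      have h1 : y • (n - a • m) ∈ S₂ := S₂.smul_mem y hm
      have h2 : a • (y • m) ∈ S₂ := by
        have : a • (y • m) = y • n - y • (n - a • m) := by
          rw [smul_sub, smul_comm]; abel
        rw [this]; exact S₂.sub_mem hn h1
      have hm1 : m ∈ S₁ := hA.1 m (hf _ h2)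
      have : n = (n - a • m) + a • m := by abel
      rw [this]; exact S₂.add_mem hm (haS m hm1)
    · -- tail
      refine ih (S₁ := S₁ ⊔ aT N y) (S₃ := S₃ ⊔ aT N y) ?_ ?_ ?_ ?_ ?_ hA.2 hC.2
      · intro n hn
        rcases Submodule.mem_sup.mp hn with ⟨s, hs, q, hq, rfl⟩
        rcases mem_aT.mp hq with ⟨m, rfl⟩
        refine Submodule.mem_sup.mpr ⟨a • s, haS s hs, y • (a • m), ?_, by
          rw [smul_add, smul_comm a y]⟩
        exact aT_smul_mem _
      · intro n hn
        rcases Submodule.mem_sup.mp hn with ⟨s, hs, q, hq, hsum⟩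
        rcases mem_aT.mp hq with ⟨m, rfl⟩
        -- a • n = s + y • m
        have hym : y • m ∈ S₃ := by
          have : y • m = a • n - s := by rw [← hsum]; abel
          rw [this]; exact S₃.sub_mem (hfg n) (hg hs)
        have hm3 : m ∈ S₃ := hC.1 m hym
        obtain ⟨m', hm'⟩ := hker m hm3
        have key : a • (n - y • m') ∈ S₂ := by
          have : a • (n - y • m') = s + y • (m - a • m') := by
            rw [smul_sub, smul_sub, ← hsum, smul_comm a y]; abel
          rw [this]; exact S₂.add_mem hs (S₂.smul_mem y hm')
        have : n - y • m' ∈ S₁ := hf _ key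
        have hn' : n = (n - y • m') + y • m' := by abel
        rw [hn']
        exact Submodule.mem_sup.mpr ⟨_, this, _, aT_smul_mem m', rfl⟩
      · exact sup_le_sup_right hg _
      · intro n hn
        rcases Submodule.mem_sup.mp hn with ⟨s, hs, q, hq, rfl⟩
        rcases mem_aT.mp hq with ⟨m, rfl⟩
        obtain ⟨m', hm'⟩ := hker s hs
        refine ⟨m', ?_⟩
        have : s + y • m - a • m' = (s - a • m') + y • m := by abel
        rw [this]
        exact Submodule.mem_sup.mpr ⟨_, hm', _, aT_smul_mem m, rfl⟩
      · intro n; exact Submodule.mem_sup_left (hfg n)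

lemma nzd_pow {a : R} {S : Submodule R N} (h : ∀ n : N, a • n ∈ S → n ∈ S) :
    ∀ (c : ℕ) (n : N), a ^ c • n ∈ S → n ∈ S := by
  intro c
  induction c with
  | zero => intro n hn; simpa using hn
  | succ c ih =>
    intro n hn
    rw [pow_succ, mul_comm, mul_smul] at hn
    exact ih n (h _ hn)

lemma regOn_sup_pow {a : R} {S : Submodule R N} {l : List R}
    (h1 : ∀ n : N, a • n ∈ S → n ∈ S) (h2 : RegOn (S ⊔ aT N a) l) :
    ∀ e : ℕ, RegOn (S ⊔ aT N (a ^ (e + 1))) l := by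
  intro e
  induction e with
  | zero => rw [pow_one]; exact h2
  | succ e ih =>
    refine regOn_of_sandwich (a := a) (S₁ := S ⊔ aT N (a ^ (e + 1)))
      (S₃ := S ⊔ aT N a) ?_ ?_ ?_ ?_ ?_ ih h2
    · intro n hn
      rcases Submodule.mem_sup.mp hn with ⟨s, hs, q, hq, rfl⟩
      rcases mem_aT.mp hq with ⟨m, rfl⟩
      refine Submodule.mem_sup.mpr ⟨a • s, S.smul_mem a hs, a ^ (e + 2) • m, ?_, by
        rw [smul_add, smul_smul, ← pow_succ']⟩
      exact aT_smul_mem _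
    · intro n hn
      rcases Submodule.mem_sup.mp hn with ⟨s, hs, q, hq, hsum⟩
      rcases mem_aT.mp hq with ⟨m, rfl⟩
      have key : a • (n - a ^ (e + 1) • m) ∈ S := by
        have : a • (n - a ^ (e + 1) • m) = s := by
          rw [smul_sub, smul_smul, ← pow_succ', ← hsum]; abel
        rw [this]; exact hs
      have := h1 _ key
      have hn' : n = (n - a ^ (e + 1) • m) + a ^ (e + 1) • m := by abel
      rw [hn']
      exact Submodule.mem_sup.mpr ⟨_, this, _, aT_smul_mem m, rfl⟩
    · refine sup_le_sup_left ?_ S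
      intro q hq
      rcases mem_aT.mp hq with ⟨m, rfl⟩
      have : a ^ (e + 2) • m = a • (a ^ (e + 1) • m) := by rw [smul_smul, ← pow_succ']
      rw [this]; exact aT_smul_mem _
    · intro n hn
      rcases Submodule.mem_sup.mp hn with ⟨s, hs, q, hq, rfl⟩
      rcases mem_aT.mp hq with ⟨m, rfl⟩
      exact ⟨m, by simpa using Submodule.mem_sup_left hs⟩
    · intro n; exact Submodule.mem_sup_right (aT_smul_mem n)

/-- powers of a regular sequence are regular. -/
lemma regOn_pow {S : Submodule R N} :
    ∀ {lp : List (R × ℕ)}, RegOn S (lp.map Prod.fst) →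
      RegOn S (lp.map fun p => p.1 ^ (p.2 + 1)) := by
  intro lp
  induction lp generalizing S with
  | nil => intro _; trivial
  | cons p lp ih =>
    rintro ⟨h1, h2⟩
    exact ⟨nzd_pow h1 _, ih (regOn_sup_pow h1 h2 p.2)⟩
end Pow

section Swap
variable {R : Type*} [CommRing R] {N : Type*} [AddCommGroup N] [Module R N]

/-- if `l₁ ++ a :: l₂` is regular on `N/S`, then `a` is a non-zerodivisor on
    `N/(S ⊔ (l₁)N ⊔ (l₂)N)`. -/
lemma RegOn.swap {S : Submodule R N} {l₂ : List R} :
    ∀ {l₁ : List R} {a : R}, RegOn S (l₁ ++ a :: l₂) →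
      ∀ n : N, a • n ∈ S ⊔ sm N l₁ ⊔ sm N l₂ → n ∈ S ⊔ sm N l₁ ⊔ sm N l₂ := by
  induction l₂ using List.reverseRecOn with
  | nil =>
    intro l₁ a h n hn
    rw [sm_nil, sup_bot_eq] at hn ⊢
    exact h.nzd_middle n hn
  | append_singleton l₂ b ih =>
    intro l₁ a h n hn
    rw [sm_append, sm_cons, sm_nil, sup_bot_eq, ← sup_assoc] at hn ⊢
    set U₀ : Submodule R N := S ⊔ sm N l₁ ⊔ sm N l₂ with hU₀
    rcases Submodule.mem_sup.mp hn with ⟨τ, hτ, q, hq, hsum⟩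
    rcases mem_aT.mp hq with ⟨m, rfl⟩
    -- b is NZD mod S ⊔ sm (l₁ ++ a :: l₂)
    have hfull : RegOn S ((l₁ ++ a :: l₂) ++ b :: []) := by
      have : (l₁ ++ a :: l₂) ++ b :: [] = l₁ ++ a :: (l₂ ++ [b]) := by simp
      rwa [this]
    have hbnzd := hfull.nzd_middle
    have hU : S ⊔ sm N (l₁ ++ a :: l₂) = U₀ ⊔ aT N a := by
      rw [sm_append, sm_cons, hU₀]
      rw [← sup_assoc]
      ac_rfl
    rw [hU] at hbnzd
    have hbm : b • m ∈ U₀ ⊔ aT N a := by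
      have : b • m = a • n - τ := by rw [← hsum]; abel
      rw [this]
      exact (U₀ ⊔ aT N a).sub_mem (Submodule.mem_sup_right (aT_smul_mem n))
        (Submodule.mem_sup_left hτ)
    have hm : m ∈ U₀ ⊔ aT N a := hbnzd m hbm
    rcases Submodule.mem_sup.mp hm with ⟨w, hw, q, hq, hsum2⟩
    rcases mem_aT.mp hq with ⟨p, rfl⟩
    -- a • (n - b • p) = τ + b • w ∈ U₀
    have hreg' : RegOn S (l₁ ++ a :: l₂) := RegOn.prefix hfull
    have key : a • (n - b • p) ∈ U₀ := by
      have : a • (n - b • p) = τ + b • w := by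
        rw [smul_sub, ← hsum, ← hsum2, smul_add, smul_comm a b]
        abel
      rw [this]
      exact U₀.add_mem hτ (U₀.smul_mem b hw)
    have h1 : n - b • p ∈ U₀ := ih hreg' _ key
    have : n = (n - b • p) + b • p := by abel
    rw [this]
    exact Submodule.mem_sup.mpr ⟨_, h1, _, aT_smul_mem p, rfl⟩
end Swap

section Main
variable {R : Type*} [CommRing R] {N : Type*} [AddCommGroup N] [Module R N]

lemma main_list (ν : N) : ∀ (s : ℕ) (lp : List (R × ℕ)),
    (lp.map Prod.snd).sum = s →
    RegOn (⊥ : Submodule R N) (lp.map Prod.fst) →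
    ν ∉ sm N (lp.map Prod.fst) →
    ((lp.map fun p => p.1 ^ p.2).prod) • ν ∉ sm N (lp.map fun p => p.1 ^ (p.2 + 1)) := by
  intro s
  induction s using Nat.strong_induction_on with
  | _ s ih =>
    intro lp hsum hreg hν hmem
    by_cases hz : ∀ p ∈ lp, p.2 = 0
    · -- base case: all exponents zero
      have hprod : (lp.map fun p : R × ℕ => p.1 ^ p.2).prod = 1 := by
        apply List.prod_eq_one
        intro x hx
        rcases List.mem_map.mp hx with ⟨p, hp, rfl⟩
        rw [hz p hp, pow_zero]
      have hlist : (lp.map fun p : R × ℕ => p.1 ^ (p.2 + 1)) = lp.map Prod.fst := by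
        apply List.map_congr_left
        intro p hp
        rw [hz p hp, pow_one]
      rw [hprod, one_smul, hlist] at hmem
      exact hν hmem
    · push_neg at hz
      obtain ⟨p, hp, hpe⟩ := hz
      obtain ⟨lp₁, lp₂, rfl⟩ := List.append_of_mem hp
      obtain ⟨a, e', hae⟩ : ∃ a e', p = (a, e') := ⟨p.1, p.2, rfl⟩
      subst hae
      obtain ⟨e, rfl⟩ : ∃ e, e' = e + 1 := by
        cases e' with
        | zero => exact absurd rfl hpe
        | succ e => exact ⟨e, rfl⟩
      set Z₁ : List R := lp₁.map fun p => p.1 ^ (p.2 + 1) with hZ₁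
      set Z₂ : List R := lp₂.map fun p => p.1 ^ (p.2 + 1) with hZ₂
      set A : R := (lp₁.map fun p : R × ℕ => p.1 ^ p.2).prod with hA
      set B : R := (lp₂.map fun p : R × ℕ => p.1 ^ p.2).prod with hB
      set W : Submodule R N := sm N Z₁ ⊔ sm N Z₂ with hW
      -- decompose the membership
      have hsm : sm N ((lp₁ ++ (a, e + 1) :: lp₂).map fun p => p.1 ^ (p.2 + 1))
          = W ⊔ aT N (a ^ (e + 2)) := by
        rw [List.map_append, List.map_cons, sm_append, sm_cons]
        rw [show ((a, e + 1).1 ^ ((a, e + 1).2 + 1)) = a ^ (e + 2) from rfl]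
        rw [sup_comm (aT N (a ^ (e + 2))) _, ← sup_assoc]
      rw [hsm] at hmem
      rcases Submodule.mem_sup.mp hmem with ⟨w, hw, q, hq, hsum2⟩
      rcases mem_aT.mp hq with ⟨m, rfl⟩
      -- the product identity
      have hprod : ((lp₁ ++ (a, e + 1) :: lp₂).map fun p : R × ℕ => p.1 ^ p.2).prod
          = a * (A * a ^ e * B) := by
        rw [List.map_append, List.map_cons, List.prod_append, List.prod_cons, ← hA, ← hB]
        ring
      -- regularity of Z₁ ++ a :: Z₂
      have hregz : RegOn (⊥ : Submodule R N) (Z₁ ++ a :: Z₂) := by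
        have h0 : RegOn (⊥ : Submodule R N) ((lp₁ ++ (a, 0) :: lp₂).map Prod.fst) := by
          have : (lp₁ ++ (a, 0) :: lp₂).map Prod.fst
              = (lp₁ ++ (a, e + 1) :: lp₂).map Prod.fst := by simp
          rw [this]; exact hreg
        have := regOn_pow h0
        rw [List.map_append, List.map_cons] at this
        simpa [pow_one] using this
      -- key step via swap
      have key : a • ((A * a ^ e * B) • ν - a ^ (e + 1) • m) ∈ W := by
        have heq : a • ((A * a ^ e * B) • ν - a ^ (e + 1) • m)
            = (a * (A * a ^ e * B)) • ν - a ^ (e + 2) • m := by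
          rw [smul_sub, smul_smul, smul_smul, ← pow_succ']
        rw [heq, ← hprod]
        have : ((lp₁ ++ (a, e + 1) :: lp₂).map fun p : R × ℕ => p.1 ^ p.2).prod • ν
            - a ^ (e + 2) • m = w := by rw [← hsum2]; abel
        rw [this]; exact hw
      have key2 : (A * a ^ e * B) • ν - a ^ (e + 1) • m ∈ W := by
        have := hregz.swap (S := ⊥) _ (by rw [bot_sup_eq, ← hW]; exact key)
        rwa [bot_sup_eq, ← hW] at this
      -- contradiction with induction hypothesis at lq
      have hQν : (A * a ^ e * B) • ν ∈ W ⊔ aT N (a ^ (e + 1)) := by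
        have : (A * a ^ e * B) • ν
            = ((A * a ^ e * B) • ν - a ^ (e + 1) • m) + a ^ (e + 1) • m := by abel
        rw [this]
        exact Submodule.mem_sup.mpr ⟨_, key2, _, aT_smul_mem m, rfl⟩
      set lq : List (R × ℕ) := lp₁ ++ (a, e) :: lp₂ with hlq
      have hs' : ((lq.map Prod.snd).sum) < s := by
        subst hsum
        simp [hlq]
      have hregq : RegOn (⊥ : Submodule R N) (lq.map Prod.fst) := by
        have : lq.map Prod.fst = (lp₁ ++ (a, e + 1) :: lp₂).map Prod.fst := by simp [hlq]
        rw [this]; exact hreg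
      have hνq : ν ∉ sm N (lq.map Prod.fst) := by
        have : lq.map Prod.fst = (lp₁ ++ (a, e + 1) :: lp₂).map Prod.fst := by simp [hlq]
        rw [this]; exact hν
      refine ih _ hs' lq rfl hregq hνq ?_
      have hprodq : (lq.map fun p : R × ℕ => p.1 ^ p.2).prod = A * a ^ e * B := by
        rw [hlq, List.map_append, List.map_cons, List.prod_append, List.prod_cons, ← hA, ← hB]
        exact (mul_assoc A (a ^ e) B).symm
      have hsmq : sm N (lq.map fun p => p.1 ^ (p.2 + 1)) = W ⊔ aT N (a ^ (e + 1)) := by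
        rw [hlq, List.map_append, List.map_cons, sm_append, sm_cons]
        rw [show ((a, e).1 ^ ((a, e).2 + 1)) = a ^ (e + 1) from rfl]
        rw [sup_comm (aT N (a ^ (e + 1))) _, ← sup_assoc]
      rw [hprodq, hsmq]
      exact hQν
end Main

section Glue
variable {R : Type*} [CommRing R] {N : Type*} [AddCommGroup N] [Module R N]

lemma regOn_ofFn : ∀ (s : ℕ) (x : Fin s → R) (S : Submodule R N),
    (∀ i : Fin s, ∀ n : N,
      x i • n ∈ S ⊔ Ideal.span (x '' {j | j < i}) • (⊤ : Submodule R N) →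
      n ∈ S ⊔ Ideal.span (x '' {j | j < i}) • (⊤ : Submodule R N)) →
    RegOn S (List.ofFn x) := by
  intro s
  induction s with
  | zero => intro x S _; rw [List.ofFn_zero]; trivial
  | succ s ih =>
    intro x S h
    rw [List.ofFn_succ]
    constructor
    · intro n hn
      have h0 : x '' {j | j < (0 : Fin (s + 1))} = ∅ := by
        ext r; simp only [Set.mem_image, Set.mem_setOf_eq, Set.mem_empty_iff_false, iff_false]
        rintro ⟨j, hj, -⟩
        exact absurd hj (by simp [Fin.lt_iff_val_lt_val])
      have := h 0 n
      rw [h0, Ideal.span_empty, Submodule.bot_smul, sup_bot_eq] at this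
      exact this hn
    · refine ih (fun i => x i.succ) (S ⊔ aT N (x 0)) (fun i n => ?_)
      have hset : x '' {j : Fin (s + 1) | j < i.succ}
          = insert (x 0) ((fun j : Fin s => x j.succ) '' {j | j < i}) := by
        ext r
        simp only [Set.mem_image, Set.mem_setOf_eq, Set.mem_insert_iff]
        constructor
        · rintro ⟨j, hj, rfl⟩
          cases j using Fin.cases with
          | zero => exact Or.inl rfl
          | succ j' => exact Or.inr ⟨j', Fin.succ_lt_succ_iff.mp hj, rfl⟩
        · rintro (rfl | ⟨j', hj', rfl⟩)
          · exact ⟨0, Fin.succ_pos i, rfl⟩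
          · exact ⟨j'.succ, Fin.succ_lt_succ_iff.mpr hj', rfl⟩
      have hbase : S ⊔ Ideal.span (x '' {j | j < i.succ}) • (⊤ : Submodule R N)
          = S ⊔ aT N (x 0) ⊔
            Ideal.span ((fun j : Fin s => x j.succ) '' {j | j < i}) • (⊤ : Submodule R N) := by
        rw [hset, Ideal.span_insert, Submodule.sup_smul, sup_assoc]
        rfl
      rw [← hbase]
      exact h i.succ n
end Glue

theorem prod_pow_smul_not_mem_span_pow_succ (R : Type*) [CommRing R] (N : Type*)
    [AddCommGroup N] [Module R N] (t : ℕ) (x : Fin t → R)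
    (hreg : ∀ i : Fin t, Function.Injective
      (fun q : N ⧸ (Ideal.span (x '' {j | j < i}) • ⊤ : Submodule R N) => x i • q))
    (ν : N) (hν : ν ∉ (Ideal.span (Set.range x) • ⊤ : Submodule R N)) (n : Fin t → ℕ) :
    (∏ i, x i ^ n i) • ν ∉
      (Ideal.span (Set.range fun i => x i ^ (n i + 1)) • ⊤ : Submodule R N) := by
  -- convert injectivity hypothesis into membership form
  have hreg' : ∀ i : Fin t, ∀ m : N,
      x i • m ∈ (Ideal.span (x '' {j | j < i}) • ⊤ : Submodule R N) →
      m ∈ (Ideal.span (x '' {j | j < i}) • ⊤ : Submodule R N) := by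
    intro i m hm
    set S := (Ideal.span (x '' {j | j < i}) • ⊤ : Submodule R N)
    have h1 : (fun q : N ⧸ S => x i • q) (Submodule.Quotient.mk m)
        = (fun q : N ⧸ S => x i • q) 0 := by
      show x i • (Submodule.Quotient.mk m : N ⧸ S) = x i • (0 : N ⧸ S)
      rw [← Submodule.Quotient.mk_smul, (Submodule.Quotient.mk_eq_zero S).mpr hm, smul_zero]
    have := hreg i h1
    exact (Submodule.Quotient.mk_eq_zero S).mp this
  -- list form of regularity
  have hreg2 : RegOn (⊥ : Submodule R N) (List.ofFn x) := by
    refine regOn_ofFn t x ⊥ (fun i m => ?_)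
    rw [bot_sup_eq]
    exact hreg' i m
  -- sm of ofFn
  have hsm : ∀ (g : Fin t → R),
      sm N (List.ofFn g) = Ideal.span (Set.range g) • (⊤ : Submodule R N) := by
    intro g
    have : {r : R | r ∈ List.ofFn g} = Set.range g := by
      ext r; exact List.mem_ofFn
    rw [sm, this]
  intro hmem
  refine main_list ν ((List.ofFn (fun i => (x i, n i)) |>.map Prod.snd).sum)
    (List.ofFn (fun i => (x i, n i))) rfl ?_ ?_ ?_
  · rw [List.map_ofFn]
    exact hreg2
  · rw [List.map_ofFn, hsm]
    exact hν
  · rw [List.map_ofFn, List.map_ofFn]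
    show ((List.ofFn fun i => x i ^ n i).prod) • ν ∈ sm N (List.ofFn fun i => x i ^ (n i + 1))
    rw [List.prod_ofFn, hsm]
    exact hmem
end
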